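/- Assume T(0,y) = 0 for all y ∈ W. Fix ε > 0 and a finite Borel measure m on X, and suppose there exist K < ∞ and β ∈ (0,1) such that [P₁^n m](B) ≤ K β^n for every n ≥ 0 and every Borel B ⊆ X \ U(ε). Write β = β₁ β₂ with β₁, β₂ ∈ (0,1) and set α = 1/β₂ > 1. Then for every Borel B ⊆ X \ U(ε) the series μ̄(B) := Σ_{k=0}^∞ α^k [P₁^k m](B) converges (indeed μ̄(B) ≤ K/(1−β₁)), μ̄ defines a finite positive measure on X \ U(ε) satisfying [P₁ μ̄](B) ≤ β₂ μ̄(B) for all Borel B ⊆ X \ U(ε) (so μ̄ is a Lyapunov measure with γ = β₂ < 1), and μ̄ dominates m: m(B) ≤ μ̄(B) for all Borel B ⊆ X \ U(ε); in particular m is absolutely continuous with respect to μ̄ on X \ U(ε). -/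

import Mathlib

open MeasureTheory Filter Metric Set

noncomputable section

/-- The restriction `P₁` of the Perron–Frobenius operator to a set `S` (= `X \ {0}`):
`[P₁ μ](B) = ∫_S ∫_W χ_B(T(x,y)) dv(y) dμ(x)`, with the output measure restricted to `S`
(so that the operator can be iterated, `P₁^0 m = m`). -/
def P1 {α Wsp : Type*} [MeasurableSpace α] [MeasurableSpace Wsp]
    (T : α → Wsp → α) (v : Measure Wsp) (S : Set α) (μ : Measure α) : Measure α :=
  ((μ.restrict S).bind fun x => v.map (T x)).restrict S

/-- if `[P₁ⁿ m](B) ≤ K βⁿ` for all `n ≥ 0` and Borel `B ⊆ X \ U(ε)`, write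
`β = β₁ β₂` with `β₁, β₂ ∈ (0,1)` and set `α = 1/β₂ > 1`. Then
`μ̄ := Σ_{k=0}^∞ α^k P₁^k m` converges on Borel sets `B ⊆ X \ U(ε)` (with
`μ̄(B) ≤ K/(1−β₁)`), satisfies `[P₁ μ̄](B) ≤ β₂ μ̄(B)` (a Lyapunov measure with `γ = β₂`),
and dominates `m`: `m(B) ≤ μ̄(B)` (in particular `m ≺ μ̄` on `X \ U(ε)`). -/
theorem lyapunov_measure_series_construction
    {d : ℕ} {Wsp : Type*} [MeasurableSpace Wsp]
    (X : Set (EuclideanSpace ℝ (Fin d))) (hX : IsCompact X)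
    (v : Measure Wsp) [IsProbabilityMeasure v]
    (T : EuclideanSpace ℝ (Fin d) → Wsp → EuclideanSpace ℝ (Fin d))
    (hT : Measurable (Function.uncurry T))
    (hTX : ∀ x ∈ X, ∀ y, T x y ∈ X)
    (heq : ∀ y : Wsp, T 0 y = 0)
    (ε : ℝ) (hε : 0 < ε)
    (m : Measure (EuclideanSpace ℝ (Fin d))) [IsFiniteMeasure m] (hmX : m Xᶜ = 0)
    (K : ENNReal) (hK : K < ⊤)
    (β β₁ β₂ : ENNReal) (hβ : β = β₁ * β₂)
    (hβ₁0 : 0 < β₁) (hβ₁1 : β₁ < 1) (hβ₂0 : 0 < β₂) (hβ₂1 : β₂ < 1)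
    (hmain : ∀ n : ℕ,
      ∀ B : Set (EuclideanSpace ℝ (Fin d)), MeasurableSet B → B ⊆ X \ ball 0 ε →
        ((P1 T v (X \ {0}))^[n] m) B ≤ K * β ^ n) :
    -- the Lyapunov measure `μ̄ = Σ_k α^k P₁^k m`, with `α = 1/β₂`
    ∀ μbar : Measure (EuclideanSpace ℝ (Fin d)),
      μbar = Measure.sum (fun k : ℕ => (β₂⁻¹ : ENNReal) ^ k • ((P1 T v (X \ {0}))^[k] m)) →
      (∀ B : Set (EuclideanSpace ℝ (Fin d)), MeasurableSet B → B ⊆ X \ ball 0 ε →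
          μbar B = ∑' k : ℕ, (β₂⁻¹ : ENNReal) ^ k * ((P1 T v (X \ {0}))^[k] m) B ∧
          μbar B ≤ K / (1 - β₁) ∧
          P1 T v (X \ {0}) μbar B ≤ β₂ * μbar B ∧
          m B ≤ μbar B) := by
  intro μbar hμbar
  set S : Set (EuclideanSpace ℝ (Fin d)) := X \ {0} with hS
  have hSmeas : MeasurableSet S :=
    (hX.isClosed.measurableSet).diff (measurableSet_singleton 0)
  -- measurability of the kernel
  have hTx : ∀ x, Measurable (T x) := fun x => hT.comp measurable_prodMk_left
  have hker : Measurable (fun x => v.map (T x)) := by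
    refine Measure.measurable_of_measurable_coe _ fun s hs => ?_
    have : (fun x => v.map (T x) s) = fun x => v (Prod.mk x ⁻¹' (Function.uncurry T ⁻¹' s)) := by
      funext x
      rw [Measure.map_apply (hTx x) hs]
      rfl
    rw [this]
    exact measurable_measure_prodMk_left (hT hs)
  -- key formula for P1 applied to a set inside S
  have hP1 : ∀ (μ : Measure (EuclideanSpace ℝ (Fin d)))
      (B : Set (EuclideanSpace ℝ (Fin d))), MeasurableSet B → B ⊆ S →
      P1 T v S μ B = ∫⁻ x in S, v ((T x) ⁻¹' B) ∂μ := by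
    intro μ B hB hBS
    rw [P1, Measure.restrict_apply hB, Set.inter_eq_self_of_subset_left hBS,
      Measure.bind_apply hB hker.aemeasurable]
    refine lintegral_congr fun x => ?_
    rw [Measure.map_apply (hTx x) hB]
  intro B hB hBε
  have hBS : B ⊆ S := fun x hx => ⟨(hBε hx).1, by
    intro h0
    exact (hBε hx).2 (by simp only [Set.mem_singleton_iff] at h0; simp [h0, mem_ball, hε])⟩
  have hβ₂ne : β₂ ≠ 0 := hβ₂0.ne'
  have hβ₂top : β₂ ≠ ⊤ := hβ₂1.ne_top
  have hinv : β₂⁻¹ * β₂ = 1 := ENNReal.inv_mul_cancel hβ₂ne hβ₂top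
  -- first: the series formula
  have h1 : μbar B = ∑' k : ℕ, (β₂⁻¹ : ENNReal) ^ k * ((P1 T v S)^[k] m) B := by
    rw [hμbar, Measure.sum_apply _ hB]
    exact tsum_congr fun k => by rw [Measure.smul_apply, smul_eq_mul]
  refine ⟨h1, ?_, ?_, ?_⟩
  · -- bound K/(1-β₁)
    rw [h1]
    calc ∑' k : ℕ, (β₂⁻¹ : ENNReal) ^ k * ((P1 T v S)^[k] m) B
        ≤ ∑' k : ℕ, K * β₁ ^ k := by
          refine ENNReal.tsum_le_tsum fun k => ?_
          calc (β₂⁻¹ : ENNReal) ^ k * ((P1 T v S)^[k] m) B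
              ≤ β₂⁻¹ ^ k * (K * β ^ k) := by
                exact mul_le_mul_right (hmain k B hB hBε) _
            _ = K * β₁ ^ k := by
                have h : (β₂⁻¹ : ENNReal) ^ k * (K * (β₁ ^ k * β₂ ^ k))
                    = K * β₁ ^ k * ((β₂⁻¹ : ENNReal) ^ k * β₂ ^ k) := by ring
                rw [hβ, mul_pow, h, ← mul_pow, hinv, one_pow, mul_one]
      _ = K / (1 - β₁) := by
          rw [ENNReal.tsum_mul_left, ENNReal.tsum_geometric, div_eq_mul_inv]
  · -- Lyapunov inequality
    have hlhs : P1 T v S μbar B = ∑' k : ℕ, (β₂⁻¹ : ENNReal) ^ k * ((P1 T v S)^[k+1] m) B := by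
      rw [hP1 _ B hB hBS, hμbar]
      rw [show ∫⁻ x in S, v (T x ⁻¹' B)
            ∂(Measure.sum fun k : ℕ => (β₂⁻¹ : ENNReal) ^ k • ((P1 T v S)^[k] m))
          = ∫⁻ x, v (T x ⁻¹' B)
            ∂(Measure.sum fun k : ℕ =>
              ((β₂⁻¹ : ENNReal) ^ k • ((P1 T v S)^[k] m)).restrict S) from by
        rw [Measure.restrict_sum_of_countable]]
      rw [lintegral_sum_measure]
      refine tsum_congr fun k => ?_
      simp only [Measure.restrict_smul, lintegral_smul_measure, smul_eq_mul]
      rw [← hP1 _ B hB hBS, Function.iterate_succ_apply']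
    have hrhs : β₂ * μbar B = ∑' k : ℕ, β₂ * ((β₂⁻¹ : ENNReal) ^ k * ((P1 T v S)^[k] m) B) := by
      rw [h1, ENNReal.tsum_mul_left]
    rw [hlhs, hrhs]
    have : ∀ k : ℕ, (β₂⁻¹ : ENNReal) ^ k * ((P1 T v S)^[k+1] m) B
        = β₂ * ((β₂⁻¹ : ENNReal) ^ (k+1) * ((P1 T v S)^[k+1] m) B) := by
      intro k
      have h : β₂ * ((β₂⁻¹ : ENNReal) ^ k * β₂⁻¹ * ((P1 T v S)^[k+1] m) B)
          = (β₂⁻¹ * β₂) * ((β₂⁻¹ : ENNReal) ^ k * ((P1 T v S)^[k+1] m) B) := by ring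
      rw [pow_succ, h, hinv, one_mul]
    calc ∑' k : ℕ, (β₂⁻¹ : ENNReal) ^ k * ((P1 T v S)^[k+1] m) B
        = ∑' k : ℕ, β₂ * ((β₂⁻¹ : ENNReal) ^ (k+1) * ((P1 T v S)^[k+1] m) B) :=
          tsum_congr this
      _ ≤ ∑' k : ℕ, β₂ * ((β₂⁻¹ : ENNReal) ^ k * ((P1 T v S)^[k] m) B) :=
          ENNReal.tsum_comp_le_tsum_of_injective Nat.succ_injective _
  · -- m ≤ μbar
    rw [h1]
    calc m B = (β₂⁻¹ : ENNReal) ^ 0 * ((P1 T v S)^[0] m) B := by simp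
      _ ≤ _ := ENNReal.le_tsum 0
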